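/- For every extension of finite fields F_q ⊆ F_{q^n} there exists an F_q-basis B of F_{q^n} such that each element b ∈ B generates F_{q^n} over F_q, i.e. F_q(b) = F_{q^n} for every b ∈ B. -/

import Mathlib

open Finset Module

lemma card_pow_eq_le (K : Type*) [Field K] [Fintype K] [DecidableEq K] (m : ℕ) (hm : 2 ≤ m) :
    (Finset.univ.filter (fun x : K => x ^ m = x)).card ≤ m := by
  classical
  set p : Polynomial K := Polynomial.X ^ m - Polynomial.X with hp
  have hpm : p.natDegree = m := by
    rw [hp, Polynomial.natDegree_sub_eq_left_of_natDegree_lt] <;>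
      simp [Polynomial.natDegree_X_pow] <;> omega
  have hp0 : p ≠ 0 := fun h => by simp [h] at hpm; omega
  have hsub : (Finset.univ.filter (fun x : K => x ^ m = x)) ⊆ p.roots.toFinset := by
    intro x hx
    simp only [Finset.mem_filter] at hx
    rw [Multiset.mem_toFinset, Polynomial.mem_roots hp0]
    simp [Polynomial.IsRoot, hp, sub_eq_zero, hx.2]
  calc (Finset.univ.filter (fun x : K => x ^ m = x)).card ≤ p.roots.toFinset.card :=
        Finset.card_le_card hsub
    _ ≤ Multiset.card p.roots := p.roots.toFinset_card_le
    _ ≤ p.natDegree := p.card_roots'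
    _ = m := hpm

lemma geom_sum_le' (q m : ℕ) (hq : 2 ≤ q) (hm : 1 ≤ m) :
    ∑ d ∈ Finset.Icc 1 m, q ^ d ≤ 2 * q ^ m - q := by
  induction m with
  | zero => omega
  | succ k ih =>
    rcases Nat.lt_or_ge 1 (k+1) with h | h
    · have hk : 1 ≤ k := by omega
      have : Finset.Icc 1 (k+1) = insert (k+1) (Finset.Icc 1 k) := by
        ext a; simp [Finset.mem_Icc]; omega
      rw [this, Finset.sum_insert (by simp)]
      have h2 : 2 * q ^ k ≤ q ^ (k+1) := by
        rw [pow_succ]; nlinarith [pow_pos (show 0 < q by omega) k]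
      have := ih hk
      have hqk : q ≤ q ^ k := Nat.le_self_pow (by omega) q
      omega
    · have hk0 : k = 0 := by omega
      subst hk0; simp; omega

/-- For every extension `F_q ⊆ F_{q^n}` of finite fields there is an `F_q`-basis of `F_{q^n}`
each of whose elements generates `F_{q^n}` over `F_q`. -/
theorem exists_basis_of_generators
    (F E : Type*) [Field F] [Fintype F] [Field E] [Fintype E] [Algebra F E]
    (n : ℕ) (hn : Module.finrank F E = n) :
    ∃ B : Basis (Fin n) F E, ∀ i : Fin n, IntermediateField.adjoin F {B i} = ⊤ := by
  classical
  set q := Fintype.card F with hq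
  have hq2 : 2 ≤ q := Fintype.one_lt_card
  have hn1 : 1 ≤ n := hn ▸ Module.finrank_pos
  rcases Nat.eq_or_lt_of_le hn1 with h1 | h2
  · -- n = 1 : every intermediate field is ⊤
    have htop : ∀ K : IntermediateField F E, K = ⊤ := by
      intro K
      apply IntermediateField.eq_of_le_of_finrank_le le_top
      have hK1 : 1 ≤ finrank F K := Module.finrank_pos
      have hT : finrank F (⊤ : IntermediateField F E) = 1 := by
        rw [IntermediateField.finrank_top', hn, ← h1]
      omega
    exact ⟨Module.finBasisOfFinrankEq F E hn, fun i => htop _⟩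
  -- n ≥ 2
  set G : Set E := {x | IntermediateField.adjoin F {x} = ⊤} with hG
  have hspan : Submodule.span F G = ⊤ := by
    by_contra hW
    set W := Submodule.span F G with hWdef
    have hdim : finrank F W < n := hn ▸ Submodule.finrank_lt hW
    have : Fintype ↥W := Fintype.ofFinite _
    have hcardW : Nat.card ↥W ≤ q ^ (n - 1) := by
      rw [Nat.card_eq_fintype_card, card_eq_pow_finrank (K := F) (V := W)]
      exact Nat.pow_le_pow_right (by omega) (by omega)
    set Gfin : Finset E := Finset.univ.filter (fun x => IntermediateField.adjoin F {x} = ⊤) with hGfin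
    set bad : Finset E := Finset.univ.filter (fun x => ¬ IntermediateField.adjoin F {x} = ⊤) with hbaddef
    have hGb : Gfin.card + bad.card = q ^ n := by
      rw [hGfin, hbaddef, Finset.card_filter_add_card_filter_not,
        Finset.card_univ, card_eq_pow_finrank (K := F) (V := E), hn]
    have : Fintype ↥(W : Set E) := Fintype.ofFinite _
    have hGW : Gfin.card + 1 ≤ q ^ (n - 1) := by
      have h0 : (0 : E) ∉ Gfin := by
        simp only [hGfin, Finset.mem_filter, Finset.mem_univ, true_and]
        intro hcon
        have : (⊥ : IntermediateField F E) = ⊤ := by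
          rw [← hcon]; simp
        have hb := congrArg (fun K : IntermediateField F E => finrank F K) this
        simp only [IntermediateField.finrank_bot, IntermediateField.finrank_top', hn] at hb
        omega
      have hins : insert (0 : E) Gfin ⊆ (W : Set E).toFinset := by
        intro x hx
        rw [Set.mem_toFinset]
        rcases Finset.mem_insert.mp hx with rfl | hx
        · exact W.zero_mem
        · exact Submodule.subset_span ((Finset.mem_filter.mp hx).2)
      calc Gfin.card + 1 = (insert (0 : E) Gfin).card := (Finset.card_insert_of_notMem h0).symm
        _ ≤ (W : Set E).toFinset.card := Finset.card_le_card hins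
        _ = Fintype.card ↥(W : Set E) := Set.toFinset_card _
        _ = Nat.card ↥(W : Set E) := Nat.card_eq_fintype_card.symm
        _ = Nat.card ↥W := rfl
        _ ≤ q ^ (n - 1) := hcardW
    have hbad : bad.card ≤ q ^ (n - 1) := by
      have hsub : bad ⊆ (n.properDivisors).biUnion
          (fun d => Finset.univ.filter (fun x : E => x ^ q ^ d = x)) := by
        intro x hx
        have hxK : IntermediateField.adjoin F {x} ≠ ⊤ := by
          simpa [hbaddef] using hx
        set K := IntermediateField.adjoin F {x} with hK
        have hd : finrank F K ∣ n := hn ▸ ⟨finrank K E, (Module.finrank_mul_finrank F K E).symm⟩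
        have hdn : finrank F K ≠ n := by
          intro h
          exact hxK (IntermediateField.eq_of_le_of_finrank_eq le_top
            (by rw [h, IntermediateField.finrank_top', hn]))
        have hmem : finrank F K ∈ n.properDivisors :=
          Nat.mem_properDivisors.mpr ⟨hd, lt_of_le_of_ne (Nat.le_of_dvd (by omega) hd) hdn⟩
        refine Finset.mem_biUnion.mpr ⟨_, hmem, ?_⟩
        simp only [Finset.mem_filter, Finset.mem_univ, true_and]
        have hxK' : x ∈ K := IntermediateField.mem_adjoin_simple_self F x
        have : Fintype ↥K := Fintype.ofFinite _
        have hpc := FiniteField.pow_card (⟨x, hxK'⟩ : K)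
        have hcK : Fintype.card K = q ^ finrank F K := card_eq_pow_finrank
        rw [hcK] at hpc
        simpa using congrArg Subtype.val hpc
      have hdiv : n.properDivisors ⊆ Finset.Icc 1 (n / 2) := by
        intro d hd
        rw [Nat.mem_properDivisors] at hd
        obtain ⟨⟨k, hk⟩, hlt⟩ := hd
        have hd1 : 1 ≤ d := by
          rcases Nat.eq_zero_or_pos d with rfl | h
          · simp at hk; omega
          · omega
        have hk2 : 2 ≤ k := by nlinarith
        have : d * 2 ≤ n := by nlinarith
        rw [Finset.mem_Icc]
        constructor
        · exact hd1
        · omega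
      calc bad.card
          ≤ ((n.properDivisors).biUnion
            (fun d => Finset.univ.filter (fun x : E => x ^ q ^ d = x))).card :=
            Finset.card_le_card hsub
        _ ≤ ∑ d ∈ n.properDivisors, (Finset.univ.filter (fun x : E => x ^ q ^ d = x)).card :=
            Finset.card_biUnion_le
        _ ≤ ∑ d ∈ n.properDivisors, q ^ d := by
            refine Finset.sum_le_sum fun d hd => ?_
            have hd1 : 1 ≤ d := (Finset.mem_Icc.mp (hdiv hd)).1
            exact card_pow_eq_le E _ (le_trans hq2 (Nat.le_self_pow (by omega) q))
        _ ≤ ∑ d ∈ Finset.Icc 1 (n / 2), q ^ d :=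
            Finset.sum_le_sum_of_subset hdiv
        _ ≤ 2 * q ^ (n / 2) - q := geom_sum_le' q (n / 2) hq2 (by omega)
        _ ≤ q ^ (n - 1) := by
            have h2 : 2 * q ^ (n / 2) ≤ q ^ (n / 2 + 1) := by
              rw [pow_succ]
              nlinarith [pow_pos (show 0 < q by omega) (n / 2)]
            rcases Nat.lt_or_ge n 3 with h3 | h3
            · have : n = 2 := by omega
              subst this
              norm_num
              omega
            · have hle : n / 2 + 1 ≤ n - 1 := by omega
              have := Nat.pow_le_pow_right (show 0 < q by omega) hle
              omega
    have hfin : q ^ n = q ^ (n - 1) * q := by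
      rw [← pow_succ]
      congr 1
      omega
    have h2qn : 2 * q ^ (n - 1) ≤ q ^ n := by
      rw [hfin]
      nlinarith [pow_pos (show 0 < q by omega) (n - 1)]
    omega
  obtain ⟨b, hbG, hbspan, hbind⟩ := exists_linearIndependent F G
  have hb : Submodule.span F b = ⊤ := by rw [hbspan, hspan]
  let B0 : Basis b F E := Basis.mk hbind (by rw [Subtype.range_coe, hb])
  have : Fintype b := Set.Finite.fintype (Set.toFinite b)
  have hcard : Fintype.card b = n := by rw [← hn, finrank_eq_card_basis B0]
  refine ⟨B0.reindex (Fintype.equivFinOfCardEq hcard), fun i => ?_⟩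
  rw [Basis.reindex_apply, Basis.mk_apply]
  exact hbG (Subtype.mem _)
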